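/- Let β and γ be real numbers with 0 < β < γ, let X be a random variable taking the value β with probability 1/2 and the value -β with probability 1/2 (β times a Rademacher variate), and let Y be independent of X and uniformly distributed on [-γ, γ]. Then the mutual information satisfies I(X; X+Y) = (β/γ)·ln 2 (that is, exactly β/γ bits). -/

import Mathlib

open MeasureTheory ProbabilityTheory
open scoped Classical

/-- The Kullback–Leibler divergence between two measures, in nats:
the integral of the log-likelihood ratio when `μ ≪ ν` and the ratio is integrable,
and `⊤` otherwise. -/
noncomputable def klDiv {α : Type*} [MeasurableSpace α] (μ ν : Measure α) : EReal :=
  if μ ≪ ν ∧ Integrable (llr μ ν) μ then ((∫ x, llr μ ν x ∂μ : ℝ) : EReal) else ⊤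

/-- The mutual information `I(X; W)` (in nats) between two random variables on a common
probability space: the KL divergence of the law of the pair `(X, W)` from the product
of the laws of `X` and of `W`. -/
noncomputable def mutualInfo {Ω α β : Type*} [MeasurableSpace Ω] [MeasurableSpace α]
    [MeasurableSpace β] (μ : Measure Ω) (X : Ω → α) (W : Ω → β) : EReal :=
  klDiv (μ.map (fun ω => (X ω, W ω))) ((μ.map X).prod (μ.map W))

open Set

lemma aux_smul_prod {α β : Type*} [MeasurableSpace α] [MeasurableSpace β]
    (c : ENNReal) (μ : Measure α) (ν : Measure β) [SFinite μ] [SFinite ν] :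
    (c • μ).prod ν = c • (μ.prod ν) := by
  ext s hs
  rw [Measure.prod_apply hs, Measure.smul_apply, Measure.prod_apply hs,
    lintegral_smul_measure]

lemma aux_withDensity_map {α β : Type*} [MeasurableSpace α] [MeasurableSpace β]
    {g : α → β} (hg : Measurable g) (μ : Measure α) {f : β → ENNReal} (hf : Measurable f) :
    (μ.map g).withDensity f = (μ.withDensity (fun x => f (g x))).map g := by
  ext s hs
  rw [withDensity_apply _ hs, Measure.restrict_map hg hs, lintegral_map hf hg,
    Measure.map_apply hg hs, withDensity_apply _ (hg hs)]

lemma aux_map_add_restrict (a : ℝ) {s : Set ℝ} (hs : MeasurableSet s) :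
    (volume.restrict ((fun x => a + x) ⁻¹' s)).map (fun x => a + x) = volume.restrict s :=
  ((measurePreserving_add_left volume a).restrict_preimage hs).map_eq

lemma aux_density_sum {A B : Set ℝ} (hA : MeasurableSet A) (hB : MeasurableSet B)
    (φ : ℝ → ENNReal) (hφ : Measurable φ)
    (hsum : A.indicator φ + B.indicator φ = (2 : ENNReal) • A.indicator 1) :
    (volume.restrict A + volume.restrict B).withDensity φ
      = (2 : ENNReal) • volume.restrict A := by
  rw [withDensity_add_measure, ← withDensity_indicator hA, ← withDensity_indicator hB,
    ← withDensity_add_right _ (hφ.indicator hB), hsum,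
    withDensity_smul _ (measurable_one.indicator hA), withDensity_indicator_one hA]

lemma aux_ind_sum {A B : Set ℝ} [∀ z : ℝ, Decidable (z ∈ A)] [∀ z : ℝ, Decidable (z ∈ B)] :
    A.indicator (fun z => if z ∈ A then (if z ∈ B then (1:ENNReal) else 2) else 0)
      + B.indicator (fun z => if z ∈ A then (if z ∈ B then (1:ENNReal) else 2) else 0)
      = (2 : ENNReal) • A.indicator 1 := by
  funext z
  simp only [Pi.add_apply, Pi.smul_apply, Set.indicator, Pi.one_apply, smul_eq_mul]
  by_cases hA : z ∈ A <;> by_cases hB : z ∈ B <;>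
    simp only [hA, hB, if_true, if_false] <;> norm_num

lemma aux_integral_log {A B : Set ℝ} [∀ z : ℝ, Decidable (z ∈ A)] [∀ z : ℝ, Decidable (z ∈ B)]
    (hA : MeasurableSet A) (hB : MeasurableSet B) (c : ENNReal) :
    ∫ z, Real.log ((if z ∈ A then (if z ∈ B then (1:ENNReal) else 2) else 0 : ENNReal)).toReal
        ∂(c • volume.restrict A)
      = c.toReal * (Real.log 2 * (volume (A \ B)).toReal) := by
  rw [integral_smul_measure, smul_eq_mul]
  congr 1
  have hcong : EqOn
      (fun z => Real.log ((if z ∈ A then (if z ∈ B then (1:ENNReal) else 2) else 0 : ENNReal)).toReal)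
      ((A \ B).indicator fun _ => Real.log 2) A := by
    intro z hz
    by_cases hzB : z ∈ B
    · simp [hz, hzB, Set.indicator, Real.log_one]
    · simp [hz, hzB, Set.indicator]
  rw [setIntegral_congr_fun hA hcong, integral_indicator (hA.diff hB), setIntegral_const,
    measureReal_restrict_apply (hA.diff hB),
    Set.inter_eq_left.mpr Set.diff_subset, smul_eq_mul, mul_comm, measureReal_def]

theorem information_leak_rademacher {Ω : Type*} [MeasurableSpace Ω]
    (μ : Measure Ω) [IsProbabilityMeasure μ]
    (X Y : Ω → ℝ) (hX : Measurable X) (hY : Measurable Y)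
    (hindep : IndepFun X Y μ)
    (β γ : ℝ) (hβ : 0 < β) (hβγ : β < γ)
    (hXlaw : μ.map X = (2 : ENNReal)⁻¹ • (Measure.dirac β + Measure.dirac (-β)))
    (hYunif : pdf.IsUniform Y (Set.Icc (-γ) γ) μ volume) :
    mutualInfo μ X (fun ω => X ω + Y ω) = ((β / γ * Real.log 2 : ℝ) : EReal) := by
  have hγ : 0 < γ := hβ.trans hβγ
  simp only [mutualInfo]
  set I : Set ℝ := Icc (-γ) γ with hI
  set A : Set ℝ := Icc (β - γ) (β + γ) with hAdef
  set B : Set ℝ := Icc (-β - γ) (-β + γ) with hBdef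
  have hA : MeasurableSet A := measurableSet_Icc
  have hB : MeasurableSet B := measurableSet_Icc
  set c : ENNReal := (volume I)⁻¹ with hc
  have hvolI : volume I = ENNReal.ofReal (2 * γ) := by
    rw [hI, Real.volume_Icc]; ring_nf
  have hvolA : volume A = ENNReal.ofReal (2 * γ) := by
    rw [hAdef, Real.volume_Icc]; ring_nf
  have hvolB : volume B = ENNReal.ofReal (2 * γ) := by
    rw [hBdef, Real.volume_Icc]; ring_nf
  have h2γpos : (0:ℝ) < 2 * γ := by linarith
  have hvolI0 : volume I ≠ 0 := by
    rw [hvolI]; exact (ENNReal.ofReal_pos.mpr h2γpos).ne'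
  have hvolItop : volume I ≠ ⊤ := by rw [hvolI]; exact ENNReal.ofReal_ne_top
  have hc_top : c ≠ ⊤ := by
    rw [hc]; exact ENNReal.inv_ne_top.mpr hvolI0
  have hcvol : c * ENNReal.ofReal (2 * γ) = 1 := by
    rw [hc, hvolI]; exact ENNReal.inv_mul_cancel (hvolI ▸ hvolI0) (hvolI ▸ hvolItop)
  have hmapY : μ.map Y = c • volume.restrict I := hYunif
  have hpair : μ.map (fun ω => (X ω, Y ω)) = (μ.map X).prod (μ.map Y) :=
    (indepFun_iff_map_prod_eq_prod_map_map hX.aemeasurable hY.aemeasurable).mp hindep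
  set rA := volume.restrict A with hrA
  set rB := volume.restrict B with hrB
  set νY := c • volume.restrict I with hνY
  have hprobY : IsProbabilityMeasure νY := by
    constructor
    rw [hνY, Measure.smul_apply, Measure.restrict_apply_univ, smul_eq_mul, hvolI]
    exact hcvol
  have h1 : νY.map (fun y => β + y) = c • rA := by
    rw [hνY, Measure.map_smul]
    congr 1
    have hpre : I = (fun x => β + x) ⁻¹' A := by
      rw [hAdef, preimage_const_add_Icc, hI]
      congr 1 <;> ring
    rw [hrA, ← aux_map_add_restrict β hA, ← hpre]
  have h2 : νY.map (fun y => -β + y) = c • rB := by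
    rw [hνY, Measure.map_smul]
    congr 1
    have hpre : I = (fun x => -β + x) ⁻¹' B := by
      rw [hBdef, preimage_const_add_Icc, hI]
      congr 1 <;> ring
    rw [hrB, ← aux_map_add_restrict (-β) hB, ← hpre]
  have hT : Measurable (fun p : ℝ × ℝ => (p.1, p.1 + p.2)) := by fun_prop
  have hadd : Measurable (fun p : ℝ × ℝ => p.1 + p.2) := by fun_prop
  -- joint law of (X, X+Y)
  have hXW : μ.map (fun ω => (X ω, X ω + Y ω))
      = ((μ.map X).prod (μ.map Y)).map (fun p : ℝ × ℝ => (p.1, p.1 + p.2)) := by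
    rw [← hpair, Measure.map_map hT (hX.prodMk hY)]; rfl
  have hW : μ.map (fun ω => X ω + Y ω)
      = ((μ.map X).prod (μ.map Y)).map (fun p : ℝ × ℝ => p.1 + p.2) := by
    rw [← hpair, Measure.map_map hadd (hX.prodMk hY)]; rfl
  have hprod : (μ.map X).prod (μ.map Y)
      = (2 : ENNReal)⁻¹ • (νY.map (Prod.mk β) + νY.map (Prod.mk (-β))) := by
    rw [hXlaw, hmapY, aux_smul_prod, Measure.add_prod, Measure.dirac_prod,
      Measure.dirac_prod]
  have hP : μ.map (fun ω => (X ω, X ω + Y ω))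
      = (2 : ENNReal)⁻¹ • ((c • rA).map (Prod.mk β) + (c • rB).map (Prod.mk (-β))) := by
    rw [hXW, hprod, Measure.map_smul, Measure.map_add _ _ hT,
      Measure.map_map hT measurable_prodMk_left, Measure.map_map hT measurable_prodMk_left]
    have e1 : ((fun p : ℝ × ℝ => (p.1, p.1 + p.2)) ∘ Prod.mk β)
        = (Prod.mk β ∘ fun y => β + y) := rfl
    have e2 : ((fun p : ℝ × ℝ => (p.1, p.1 + p.2)) ∘ Prod.mk (-β))
        = (Prod.mk (-β) ∘ fun y => -β + y) := rfl
    rw [e1, e2, ← Measure.map_map measurable_prodMk_left (by fun_prop),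
      ← Measure.map_map measurable_prodMk_left (by fun_prop), h1, h2]
  have hZ : μ.map (fun ω => X ω + Y ω) = (2 : ENNReal)⁻¹ • (c • rA + c • rB) := by
    rw [hW, hprod, Measure.map_smul, Measure.map_add _ _ hadd,
      Measure.map_map hadd measurable_prodMk_left, Measure.map_map hadd measurable_prodMk_left]
    have e1 : ((fun p : ℝ × ℝ => p.1 + p.2) ∘ Prod.mk β) = (fun y => β + y) := rfl
    have e2 : ((fun p : ℝ × ℝ => p.1 + p.2) ∘ Prod.mk (-β)) = (fun y => -β + y) := rfl
    rw [e1, e2, h1, h2]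
  set νZ : Measure ℝ := (2 : ENNReal)⁻¹ • (c • rA + c • rB) with hνZ
  have hprobZ : IsProbabilityMeasure νZ := hZ ▸ Measure.isProbabilityMeasure_map (hX.add hY).aemeasurable
  have hQ : (μ.map X).prod (μ.map (fun ω => X ω + Y ω))
      = (2 : ENNReal)⁻¹ • (νZ.map (Prod.mk β) + νZ.map (Prod.mk (-β))) := by
    rw [hZ, hXlaw, aux_smul_prod, Measure.add_prod, Measure.dirac_prod,
      Measure.dirac_prod]
  -- densities
  set φ : ℝ → ENNReal := fun z => if z ∈ A then (if z ∈ B then 1 else 2) else 0 with hφdef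
  set ψ : ℝ → ENNReal := fun z => if z ∈ B then (if z ∈ A then 1 else 2) else 0 with hψdef
  set f : ℝ × ℝ → ENNReal := fun p => if p.1 = β then φ p.2 else ψ p.2 with hfdef
  have hφm : Measurable φ := by
    rw [hφdef]
    exact Measurable.ite hA (Measurable.ite hB measurable_const measurable_const)
      measurable_const
  have hψm : Measurable ψ := by
    rw [hψdef]
    exact Measurable.ite hB (Measurable.ite hA measurable_const measurable_const)
      measurable_const
  have hfm : Measurable f := by
    rw [hfdef]
    exact Measurable.ite (measurable_fst (measurableSet_singleton β))
      (hφm.comp measurable_snd) (hψm.comp measurable_snd)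
  have htwo : ((2 : ENNReal)⁻¹ * c) * 2 = c := by
    rw [mul_comm ((2 : ENNReal)⁻¹) c, mul_assoc, ENNReal.inv_mul_cancel two_ne_zero
      ENNReal.ofNat_ne_top, mul_one]
  have hwdφ : νZ.withDensity φ = c • rA := by
    rw [hνZ, ← smul_add, smul_smul, withDensity_smul_measure, hrA, hrB,
      aux_density_sum hA hB φ hφm (by rw [hφdef]; exact aux_ind_sum), smul_smul, htwo]
  have hwdψ : νZ.withDensity ψ = c • rB := by
    rw [hνZ, ← smul_add, smul_smul, withDensity_smul_measure, add_comm rA rB, hrA, hrB,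
      aux_density_sum hB hA ψ hψm (by rw [hψdef]; exact aux_ind_sum), smul_smul, htwo]
  have hfβ : (fun z => f (Prod.mk β z)) = φ := by
    funext z; rw [hfdef]; exact if_pos rfl
  have hfmβ : (fun z => f (Prod.mk (-β) z)) = ψ := by
    funext z; rw [hfdef]
    exact if_neg (by intro h; simp only at h; linarith)
  have hPQ : μ.map (fun ω => (X ω, X ω + Y ω))
      = ((μ.map X).prod (μ.map (fun ω => X ω + Y ω))).withDensity f := by
    rw [hP, hQ, withDensity_smul_measure, withDensity_add_measure,
      aux_withDensity_map measurable_prodMk_left νZ hfm,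
      aux_withDensity_map measurable_prodMk_left νZ hfm, hfβ, hfmβ, hwdφ, hwdψ]
  -- absolute continuity and probability instances
  have hac : μ.map (fun ω => (X ω, X ω + Y ω))
      ≪ (μ.map X).prod (μ.map (fun ω => X ω + Y ω)) := by
    rw [hPQ]; exact withDensity_absolutelyContinuous _ f
  haveI hprobP : IsProbabilityMeasure (μ.map (fun ω => (X ω, X ω + Y ω))) :=
    Measure.isProbabilityMeasure_map ((hX.prodMk (hX.add hY)).aemeasurable)
  haveI hprobX : IsProbabilityMeasure (μ.map X) :=
    Measure.isProbabilityMeasure_map hX.aemeasurable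
  haveI hprobW : IsProbabilityMeasure (μ.map (fun ω => X ω + Y ω)) :=
    Measure.isProbabilityMeasure_map (hX.add hY).aemeasurable
  have hrn : (μ.map (fun ω => (X ω, X ω + Y ω))).rnDeriv
        ((μ.map X).prod (μ.map (fun ω => X ω + Y ω)))
      =ᵐ[(μ.map X).prod (μ.map (fun ω => X ω + Y ω))] f := by
    nth_rewrite 1 [hPQ]
    exact Measure.rnDeriv_withDensity _ hfm
  have hrnP : (μ.map (fun ω => (X ω, X ω + Y ω))).rnDeriv
        ((μ.map X).prod (μ.map (fun ω => X ω + Y ω)))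
      =ᵐ[μ.map (fun ω => (X ω, X ω + Y ω))] f := hrn.filter_mono hac.ae_le
  set g : ℝ × ℝ → ℝ := fun p => Real.log ((f p).toReal) with hgdef
  have hgm : Measurable g := Real.measurable_log.comp hfm.ennreal_toReal
  have hllr : llr (μ.map (fun ω => (X ω, X ω + Y ω)))
        ((μ.map X).prod (μ.map (fun ω => X ω + Y ω)))
      =ᵐ[μ.map (fun ω => (X ω, X ω + Y ω))] g := by
    filter_upwards [hrnP] with x hx
    simp only [llr_def, hgdef]
    rw [hx]
  have hfvals : ∀ p : ℝ × ℝ, f p = 0 ∨ f p = 1 ∨ f p = 2 := by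
    intro p
    simp only [hfdef, hφdef, hψdef]
    split_ifs <;> simp
  have hgb : ∀ p, |g p| ≤ Real.log 2 := by
    have hlog2 : (0:ℝ) ≤ Real.log 2 := Real.log_nonneg (by norm_num)
    intro p
    rw [hgdef]
    rcases hfvals p with h | h | h <;>
      simp [hgdef, h, abs_of_nonneg hlog2, hlog2]
  have hgint : Integrable g (μ.map (fun ω => (X ω, X ω + Y ω))) :=
    Integrable.mono' (integrable_const (Real.log 2)) hgm.aestronglyMeasurable
      (Filter.Eventually.of_forall (fun p => by rw [Real.norm_eq_abs]; exact hgb p))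
  have hllrint : Integrable (llr (μ.map (fun ω => (X ω, X ω + Y ω)))
      ((μ.map X).prod (μ.map (fun ω => X ω + Y ω)))) (μ.map (fun ω => (X ω, X ω + Y ω))) :=
    hgint.congr hllr.symm
  -- geometry of the overlap
  have hAB : A ∩ B = Icc (β - γ) (γ - β) := by
    rw [hAdef, hBdef, Icc_inter_Icc, max_eq_left (by linarith), min_eq_right (by linarith)]
    congr 1
    ring
  have hvolAB : volume (A ∩ B) = ENNReal.ofReal (2*γ - 2*β) := by
    rw [hAB, Real.volume_Icc]
    ring_nf
  have hvolABtop : volume (A ∩ B) ≠ ⊤ := by rw [hvolAB]; exact ENNReal.ofReal_ne_top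
  have hdiffA : volume (A \ B) = ENNReal.ofReal (2*β) := by
    have h1 : A \ B = A \ (A ∩ B) := by rw [Set.diff_self_inter]
    rw [h1, measure_diff Set.inter_subset_left (hA.inter hB).nullMeasurableSet hvolABtop,
      hvolA, hvolAB, ← ENNReal.ofReal_sub _ (by linarith)]
    congr 1
    ring
  have hdiffB : volume (B \ A) = ENNReal.ofReal (2*β) := by
    have h1 : B \ A = B \ (A ∩ B) := by rw [Set.inter_comm, Set.diff_self_inter]
    rw [h1, measure_diff Set.inter_subset_right (hA.inter hB).nullMeasurableSet hvolABtop,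
      hvolB, hvolAB, ← ENNReal.ofReal_sub _ (by linarith)]
    congr 1
    ring
  have hctr : c.toReal = (2*γ)⁻¹ := by
    rw [hc, hvolI, ENNReal.toReal_inv, ENNReal.toReal_ofReal h2γpos.le]
  -- the two slice integrals
  have hs1 : ∫ p, g p ∂((c • rA).map (Prod.mk β)) = (2*γ)⁻¹ * (Real.log 2 * (2*β)) := by
    rw [integral_map measurable_prodMk_left.aemeasurable hgm.aestronglyMeasurable]
    have he : (fun z => g (Prod.mk β z)) = fun z =>
        Real.log ((if z ∈ A then (if z ∈ B then (1:ENNReal) else 2) else 0 : ENNReal)).toReal := by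
      funext z
      simp only [hgdef, hfdef, hφdef, hψdef]
      norm_num
    rw [he, hrA, aux_integral_log hA hB c, hdiffA, hctr,
      ENNReal.toReal_ofReal (by linarith)]
  have hs2 : ∫ p, g p ∂((c • rB).map (Prod.mk (-β))) = (2*γ)⁻¹ * (Real.log 2 * (2*β)) := by
    rw [integral_map measurable_prodMk_left.aemeasurable hgm.aestronglyMeasurable]
    have he : (fun z => g (Prod.mk (-β) z)) = fun z =>
        Real.log ((if z ∈ B then (if z ∈ A then (1:ENNReal) else 2) else 0 : ENNReal)).toReal := by
      funext z
      simp only [hgdef, hfdef, hφdef, hψdef]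
      rw [if_neg (show ¬((-β : ℝ) = β) from fun h => by linarith)]
    rw [he, hrB, aux_integral_log hB hA c, hdiffB, hctr,
      ENNReal.toReal_ofReal (by linarith)]
  have hint' : Integrable g ((c • rA).map (Prod.mk β) + (c • rB).map (Prod.mk (-β))) := by
    have h := hgint
    rw [hP] at h
    exact (integrable_smul_measure (by simp) (by simp)).mp h
  have hintval : ∫ p, g p ∂(μ.map (fun ω => (X ω, X ω + Y ω))) = β / γ * Real.log 2 := by
    rw [hP, integral_smul_measure,
      integral_add_measure hint'.left_of_add_measure hint'.right_of_add_measure, hs1, hs2]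
    simp only [ENNReal.toReal_inv, ENNReal.toReal_ofNat, smul_eq_mul]
    field_simp
    ring
  have hfinal : ∫ x, llr (μ.map (fun ω => (X ω, X ω + Y ω)))
        ((μ.map X).prod (μ.map (fun ω => X ω + Y ω))) x
        ∂(μ.map (fun ω => (X ω, X ω + Y ω))) = β / γ * Real.log 2 :=
    (integral_congr_ae hllr).trans hintval
  rw [klDiv, if_pos ⟨hac, hllrint⟩, hfinal]
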